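/- For every real number H with 0 < H < 1/2, one has (1/2 - H) · B(H + 1/2, 1 - 2H) ≤ 1, where B denotes the Euler Beta function. -/
import Mathlib

open MeasureTheory
open intervalIntegral

/-- The Euler Beta function `B(x,y) = ∫_0^1 z^(x-1) (1-z)^(y-1) dz`. -/
noncomputable def eulerBeta (x y : ℝ) : ℝ :=
  ∫ z in (0:ℝ)..1, z ^ (x - 1) * (1 - z) ^ (y - 1)

lemma eulerBeta_eq_complex (x y : ℝ) :
    ((eulerBeta x y : ℝ) : ℂ) = Complex.betaIntegral x y := by
  rw [eulerBeta, Complex.betaIntegral, ← intervalIntegral.integral_ofReal]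
  apply intervalIntegral.integral_congr
  intro z hz
  rw [Set.uIcc_of_le (by norm_num : (0:ℝ) ≤ 1)] at hz
  push_cast
  rw [Complex.ofReal_cpow hz.1, Complex.ofReal_cpow (by linarith [hz.2] : (0:ℝ) ≤ 1 - z)]
  push_cast
  ring

lemma gamma_mul_gamma (x y : ℝ) (hx : 0 < x) (hy : 0 < y) :
    Real.Gamma x * Real.Gamma y = Real.Gamma (x + y) * eulerBeta x y := by
  have := Complex.Gamma_mul_Gamma_eq_betaIntegral
    (s := (x:ℂ)) (t := (y:ℂ)) (by simpa using hx) (by simpa using hy)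
  rw [← Complex.ofReal_add, Complex.Gamma_ofReal, Complex.Gamma_ofReal, Complex.Gamma_ofReal,
    ← eulerBeta_eq_complex] at this
  exact_mod_cast this

theorem stmt1 (H : ℝ) (hH0 : 0 < H) (hH : H < 1/2) :
    (1/2 - H) * eulerBeta (H + 1/2) (1 - 2*H) ≤ 1 := by
  set x : ℝ := H + 1/2 with hxdef
  set y : ℝ := 1 - 2*H with hydef
  have hx : 0 < x := by simp [hxdef]; linarith
  have hy : 0 < y := by simp [hydef]; linarith
  have hxy : 0 < x + y := by linarith
  -- identity : y * B x y = (x+y) * B x (y+1)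
  have h1 := gamma_mul_gamma x y hx hy
  have h2 := gamma_mul_gamma x (y + 1) hx (by linarith)
  have hG1 : Real.Gamma (y + 1) = y * Real.Gamma y := Real.Gamma_add_one (ne_of_gt hy)
  have hG2 : Real.Gamma (x + (y + 1)) = (x + y) * Real.Gamma (x + y) := by
    rw [show x + (y + 1) = (x + y) + 1 by ring]
    exact Real.Gamma_add_one (ne_of_gt hxy)
  have hGpos : 0 < Real.Gamma (x + y) := Real.Gamma_pos_of_pos hxy
  have hxGpos : 0 < Real.Gamma x := Real.Gamma_pos_of_pos hx
  have hyGpos : 0 < Real.Gamma y := Real.Gamma_pos_of_pos hy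
  have key : y * eulerBeta x y = (x + y) * eulerBeta x (y + 1) := by
    have : Real.Gamma x * (y * Real.Gamma y) = (x+y) * Real.Gamma (x+y) * eulerBeta x (y+1) := by
      rw [← hG1, ← hG2]; exact h2
    rw [hG1, hG2] at h2
    exact mul_left_cancel₀ (ne_of_gt hGpos) (by linear_combination h2 - y * h1)
  -- bound B x (y+1) ≤ 4/3
  have hint1 : IntervalIntegrable (fun z : ℝ => z ^ (x - 1) * (1 - z) ^ (y + 1 - 1))
      volume 0 1 := by
    apply IntervalIntegrable.mul_continuousOn (intervalIntegrable_rpow' (by linarith))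
    apply ContinuousOn.rpow_const (by fun_prop)
    intro z _
    right; linarith
  have hint2 : IntervalIntegrable
      (fun z : ℝ => (1 - H) * z ^ (-(1/2) : ℝ) - (1 - 3*H) * z ^ ((1/2) : ℝ))
      volume 0 1 := by
    exact ((intervalIntegrable_rpow' (by norm_num)).const_mul _).sub
      ((intervalIntegrable_rpow' (by norm_num)).const_mul _)
  have hpt : ∀ z ∈ Set.Icc (0:ℝ) 1,
      z ^ (x - 1) * (1 - z) ^ (y + 1 - 1) ≤
        (1 - H) * z ^ (-(1/2) : ℝ) - (1 - 3*H) * z ^ ((1/2) : ℝ) := by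
    intro z hz
    obtain ⟨hz0, hz1⟩ := hz
    rcases eq_or_lt_of_le hz0 with h0 | h0
    · rw [← h0]
      rw [Real.zero_rpow (by simp [hxdef]; linarith), Real.zero_rpow (by norm_num),
        Real.zero_rpow (by norm_num)]
      simp
    · -- z > 0
      have hamgm := Real.geom_mean_le_arith_mean3_weighted
        (le_of_lt hH0) (by linarith : (0:ℝ) ≤ 1 - 2*H) (le_of_lt hH0)
        (le_of_lt h0) (by linarith : (0:ℝ) ≤ 1 - z) zero_le_one (by ring)
      simp only [Real.one_rpow, mul_one] at hamgm
      -- hamgm : z^H * (1-z)^(1-2H) ≤ H*z + (1-2H)*(1-z) + H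
      have hx1 : x - 1 = -(1/2) + H := by rw [hxdef]; ring
      have hy1 : y + 1 - 1 = 1 - 2*H := by rw [hydef]; ring
      rw [hx1, hy1, Real.rpow_add h0, mul_assoc]
      have hpow : z ^ (-(1/2):ℝ) * z = z ^ ((1/2):ℝ) := by
        nth_rewrite 2 [← Real.rpow_one z]
        rw [← Real.rpow_add h0]; norm_num
      have hp1 : (0:ℝ) < z ^ (-(1/2):ℝ) := Real.rpow_pos_of_pos h0 _
      calc z ^ (-(1/2):ℝ) * (z ^ H * (1 - z) ^ (1 - 2*H))
          ≤ z ^ (-(1/2):ℝ) * (H * z + (1 - 2*H) * (1 - z) + H) := by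
            exact mul_le_mul_of_nonneg_left hamgm (le_of_lt hp1)
        _ = (1 - H) * z ^ (-(1/2):ℝ) - (1 - 3*H) * (z ^ (-(1/2):ℝ) * z) := by ring
        _ = (1 - H) * z ^ (-(1/2):ℝ) - (1 - 3*H) * z ^ ((1/2):ℝ) := by rw [hpow]
  have hBle : eulerBeta x (y + 1) ≤ 4/3 := by
    have hmono := intervalIntegral.integral_mono_on (by norm_num : (0:ℝ) ≤ 1) hint1 hint2 hpt
    have hcalc : (∫ z in (0:ℝ)..1,
        ((1 - H) * z ^ (-(1/2) : ℝ) - (1 - 3*H) * z ^ ((1/2) : ℝ))) = 4/3 := by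
      rw [intervalIntegral.integral_sub (((intervalIntegrable_rpow' (by norm_num))).const_mul _)
        ((intervalIntegrable_rpow' (by norm_num)).const_mul _),
        intervalIntegral.integral_const_mul, intervalIntegral.integral_const_mul,
        integral_rpow (Or.inl (by norm_num)), integral_rpow (Or.inl (by norm_num))]
      norm_num [Real.zero_rpow]
      ring
    rw [eulerBeta]
    calc (∫ z in (0:ℝ)..1, z ^ (x-1) * (1-z) ^ (y+1-1)) ≤ _ := hmono
      _ = 4/3 := hcalc
  -- conclude
  have hBnn : 0 ≤ eulerBeta x (y+1) := by
    have := gamma_mul_gamma x (y+1) hx (by linarith)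
    nlinarith [Real.Gamma_pos_of_pos hx, Real.Gamma_pos_of_pos (by linarith : (0:ℝ) < y+1),
      Real.Gamma_pos_of_pos (by linarith : (0:ℝ) < x + (y+1))]
  have : (1/2 - H) * eulerBeta x y = ((x+y)/2) * eulerBeta x (y+1) := by
    have hh : (1/2 - H) = y / 2 := by rw [hydef]; ring
    rw [hh]
    linear_combination key / 2
  rw [this]
  have hxy2 : x + y = 3/2 - H := by rw [hxdef, hydef]; ring
  calc ((x+y)/2) * eulerBeta x (y+1) ≤ ((x+y)/2) * (4/3) := by
        apply mul_le_mul_of_nonneg_left hBle; linarith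
    _ ≤ 1 := by rw [hxy2]; nlinarith
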